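/- Let G be a d-regular finite bipartite graph, and consider a proper edge coloring of G such that for every pair consisting of a left vertex and a right vertex, at most m colors touch both vertices, where m < d. Then the number of colors used is at least d^2 / m, which is strictly larger than the maximal degree d. -/

import Mathlib

/-- Refinement of Vizing's theorem for regular bipartite graphs under a richness
constraint. The bipartite graph has left vertices `U` (nonempty), right vertices `V`,
edge set `E ⊆ U × V`, and is `d`-regular. The coloring `c` is proper and, for every
pair of a left vertex and a right vertex, at most `m < d` colors touch both. Then the
number of colors used is at least `d² / m`, which is strictly larger than the maximal
degree `d`. -/
theorem regular_edge_coloring_lower_bound {U V C : Type*} [Fintype U] [Fintype V]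
    [DecidableEq U] [DecidableEq V] [DecidableEq C] [Nonempty U]
    (E : Finset (U × V)) (c : U × V → C) (d m : ℕ)
    (hdL : ∀ u : U, (E.filter fun e => e.1 = u).card = d)
    (hdR : ∀ v : V, (E.filter fun e => e.2 = v).card = d)
    (hproper : ∀ e ∈ E, ∀ e' ∈ E, e ≠ e' → (e.1 = e'.1 ∨ e.2 = e'.2) → c e ≠ c e')
    (hm : m < d)
    (hrich : ∀ (u : U) (v : V),
      ((E.image c).filter fun γ =>
        (∃ v' : V, (u, v') ∈ E ∧ c (u, v') = γ) ∧
        (∃ u' : U, (u', v) ∈ E ∧ c (u', v) = γ)).card ≤ m) :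
    ((d : ℝ) ^ 2) / m ≤ ((E.image c).card : ℝ) ∧ (d : ℝ) < ((d : ℝ) ^ 2) / m := by
  classical
  have hd0 : 0 < d := lt_of_le_of_lt (Nat.zero_le m) hm
  set K := E.image c with hK
  set k : C → ℕ := fun γ => (E.filter fun e => c e = γ).card with hk
  -- |E| = d * |U| = d * |V|
  have hEU : E.card = d * Fintype.card U := by
    have := Finset.card_eq_sum_card_fiberwise
      (f := Prod.fst) (s := E) (t := Finset.univ) (fun e _ => Finset.mem_univ _)
    simp only [hdL] at this
    simpa [Finset.sum_const, mul_comm] using this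
  have hEV : E.card = d * Fintype.card V := by
    have := Finset.card_eq_sum_card_fiberwise
      (f := Prod.snd) (s := E) (t := Finset.univ) (fun e _ => Finset.mem_univ _)
    simp only [hdR] at this
    simpa [Finset.sum_const, mul_comm] using this
  have hUV : Fintype.card U = Fintype.card V :=
    Nat.eq_of_mul_eq_mul_left hd0 (hEU ▸ hEV)
  set n := Fintype.card U with hn
  have hn0 : 0 < n := Fintype.card_pos
  -- sum of fiber sizes
  have hsum : ∑ γ ∈ K, k γ = E.card := by
    rw [hK]
    exact (Finset.card_eq_sum_card_fiberwise
      (fun e he => Finset.mem_image_of_mem c he)).symm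
  -- the condition
  set cond : C → U × V → Prop := fun γ p =>
    (∃ v' : V, (p.1, v') ∈ E ∧ c (p.1, v') = γ) ∧
    (∃ u' : U, (u', p.2) ∈ E ∧ c (u', p.2) = γ) with hcond
  -- key: k γ ^ 2 ≤ number of pairs (u,v) such that γ touches both
  have key : ∀ γ ∈ K, k γ ^ 2 ≤
      ((Finset.univ ×ˢ Finset.univ : Finset (U × V)).filter (cond γ)).card := by
    intro γ hγ
    have : k γ ^ 2 = ((E.filter fun e => c e = γ) ×ˢ (E.filter fun e => c e = γ)).card := by
      rw [Finset.card_product, sq]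
    rw [this]
    apply Finset.card_le_card_of_injOn (fun q => (q.1.1, q.2.2))
    · rintro ⟨e, e'⟩ hq
      simp only [Finset.mem_coe, Finset.mem_product, Finset.mem_filter] at hq
      obtain ⟨⟨heE, hec⟩, ⟨he'E, he'c⟩⟩ := hq
      simp only [Finset.mem_coe, Finset.mem_filter, Finset.mem_product, Finset.mem_univ, true_and, hcond]
      exact ⟨⟨e.2, by simpa using heE, by simpa using hec⟩,
             ⟨e'.1, by simpa using he'E, by simpa using he'c⟩⟩
    · rintro ⟨e, e'⟩ hq ⟨f, f'⟩ hq' hfe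
      simp only [Finset.mem_coe, Finset.mem_product, Finset.mem_filter] at hq hq'
      obtain ⟨⟨heE, hec⟩, ⟨he'E, he'c⟩⟩ := hq
      obtain ⟨⟨hfE, hfc⟩, ⟨hf'E, hf'c⟩⟩ := hq'
      simp only [Prod.mk.injEq] at hfe
      have h1 : e = f := by
        by_contra hne
        exact hproper e heE f hfE hne (Or.inl hfe.1) (by rw [hec, hfc])
      have h2 : e' = f' := by
        by_contra hne
        exact hproper e' he'E f' hf'E hne (Or.inr hfe.2) (by rw [he'c, hf'c])
      rw [h1, h2]
  -- double counting
  have hswap : ∑ γ ∈ K, ((Finset.univ ×ˢ Finset.univ : Finset (U × V)).filter (cond γ)).card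
      ≤ m * (n * n) := by
    have : ∑ γ ∈ K, ((Finset.univ ×ˢ Finset.univ : Finset (U × V)).filter (cond γ)).card
        = ∑ p ∈ (Finset.univ ×ˢ Finset.univ : Finset (U × V)), (K.filter (fun γ => cond γ p)).card := by
      simp_rw [Finset.card_filter]
      exact Finset.sum_comm
    rw [this]
    calc ∑ p ∈ (Finset.univ ×ˢ Finset.univ : Finset (U × V)), (K.filter (fun γ => cond γ p)).card
        ≤ ∑ _p ∈ (Finset.univ ×ˢ Finset.univ : Finset (U × V)), m := by
          apply Finset.sum_le_sum
          rintro ⟨u, v⟩ _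
          exact hrich u v
      _ = m * (n * n) := by
          rw [Finset.sum_const, Finset.card_product, Finset.card_univ, Finset.card_univ,
            smul_eq_mul, ← hn, ← hUV, mul_comm]
  have hsq : ∑ γ ∈ K, k γ ^ 2 ≤ m * (n * n) :=
    le_trans (Finset.sum_le_sum key) hswap
  -- Cauchy-Schwarz
  have hcs : ((d * n : ℕ) : ℝ) ^ 2 ≤ (K.card : ℝ) * (m * (n * n) : ℕ) := by
    have h1 : ((∑ γ ∈ K, k γ : ℕ) : ℝ) ^ 2 ≤ (K.card : ℝ) * ∑ γ ∈ K, (k γ : ℝ) ^ 2 := by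
      push_cast
      exact sq_sum_le_card_mul_sum_sq
    have h2 : (∑ γ ∈ K, (k γ : ℝ) ^ 2) ≤ ((m * (n * n) : ℕ) : ℝ) := by
      push_cast
      exact_mod_cast Nat.cast_le.mpr hsq
    calc ((d * n : ℕ) : ℝ) ^ 2 = ((∑ γ ∈ K, k γ : ℕ) : ℝ) ^ 2 := by rw [hsum, hEU]
      _ ≤ (K.card : ℝ) * ∑ γ ∈ K, (k γ : ℝ) ^ 2 := h1
      _ ≤ (K.card : ℝ) * ((m * (n * n) : ℕ) : ℝ) := by
          apply mul_le_mul_of_nonneg_left h2 (by positivity)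
  -- d^2 ≤ |K| * m
  have hmain : (d : ℝ) ^ 2 ≤ (K.card : ℝ) * m := by
    have hnR : (0 : ℝ) < (n : ℝ) := by exact_mod_cast hn0
    have : (d : ℝ) ^ 2 * (n : ℝ) ^ 2 ≤ ((K.card : ℝ) * m) * (n : ℝ) ^ 2 := by
      push_cast at hcs
      nlinarith [hcs]
    exact le_of_mul_le_mul_right this (by positivity)
  -- m > 0
  have hm0 : 0 < m := by
    rcases Nat.eq_zero_or_pos m with h | h
    · exfalso
      rw [h] at hmain
      push_cast at hmain
      have : (0:ℝ) < (d:ℝ)^2 := by positivity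
      linarith
    · exact h
  have hmR : (0 : ℝ) < (m : ℝ) := by exact_mod_cast hm0
  constructor
  · rw [div_le_iff₀ hmR]
    exact hmain
  · rw [lt_div_iff₀ hmR]
    have : (m : ℝ) < (d : ℝ) := by exact_mod_cast hm
    nlinarith [this, show (0:ℝ) < (d:ℝ) from by exact_mod_cast hd0]
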